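/- Fix α ∈ (0,1). For n ≥ 2 let k = k(n) = ⌊((α/2)·log₃ n)^{1/2}⌋, u = u(n) = 1/(√(π n)·3^k), and r = u·3^k. Let x_1,…,x_n be n points drawn independently and uniformly at random from [0,1]². Then there is a constant C > 0 such that, for all sufficiently large n, the conditional probability that {x_1,…,x_n} contains a Zeno configuration of size k with scale u centered at x_1, given that x_1 ∈ [r, 1−r]², is at least C·3^{−2k(k−1)}, and hence is Ω(n^{−α}). -/

import Mathlib

open MeasureTheory Filter
open scoped Classical

noncomputable section

/-- Points in `d`-dimensional Euclidean space. -/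
abbrev Pt (d : ℕ) : Type := EuclideanSpace ℝ (Fin d)

/-- The transmission radius of vertex `i` in the graph `G` on the points `x`:
the distance to its furthest neighbour (`0` if `i` is isolated). -/
noncomputable def rad {d n : ℕ} (x : Fin n → Pt d) (G : SimpleGraph (Fin n)) (i : Fin n) : ℝ :=
  ((Finset.univ.filter fun j => G.Adj i j).sup fun j =>
    (⟨dist (x i) (x j), dist_nonneg⟩ : NNReal) : NNReal)

/-- The interference at a point `p` caused by the graph `G` on the points `x`:
the number of balls `B(x i, rad x G i)` containing `p`. -/
noncomputable def interAt {d n : ℕ} (x : Fin n → Pt d) (G : SimpleGraph (Fin n)) (p : Pt d) : ℕ :=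
  (Finset.univ.filter fun i => dist p (x i) ≤ rad x G i).card

/-- The (maximum receiver-centric) interference of `G`:
the maximum interference at a vertex. -/
noncomputable def interG {d n : ℕ} (x : Fin n → Pt d) (G : SimpleGraph (Fin n)) : ℕ :=
  Finset.univ.sup fun i => interAt x G (x i)

/-- Total Euclidean edge length of `G` on the points `x`. -/
noncomputable def tlen {d n : ℕ} (x : Fin n → Pt d) (G : SimpleGraph (Fin n)) : ℝ :=
  ∑ e ∈ G.edgeFinset, Sym2.lift ⟨fun i j => dist (x i) (x j), fun i j => dist_comm _ _⟩ e

/-- `G` is a minimum spanning tree of the points `x`: a connected graph on the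
vertex set of minimum total Euclidean edge length. -/
def IsMST {d n : ℕ} (x : Fin n → Pt d) (G : SimpleGraph (Fin n)) : Prop :=
  G.Connected ∧ ∀ H : SimpleGraph (Fin n), H.Connected → tlen x G ≤ tlen x H

/-- The unit cube `[0,1]^d`. -/
def cube (d : ℕ) : Set (Pt d) := {y | ∀ i, y i ∈ Set.Icc (0 : ℝ) 1}

/-- The uniform distribution on `[0,1]^d`. -/
noncomputable def unif (d : ℕ) : Measure (Pt d) := volume.restrict (cube d)

/-- The joint law of `n` i.i.d. uniform points in `[0,1]^d`. -/
noncomputable def iidUnif (d n : ℕ) : Measure (Fin n → Pt d) := Measure.pi fun _ => unif d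

/-- The center of the `i`-th small ball of a Zeno configuration with scale `u`
centered at `x`: the point `x + (u * 3 ^ i, 0)` for `i ≥ 1`, and `x` itself for `i = 0`. -/
noncomputable def zenoCenter (x : Pt 2) (u : ℝ) (i : ℕ) : Pt 2 :=
  if i = 0 then x else x + EuclideanSpace.single (0 : Fin 2) (u * 3 ^ i)

/-- The point family `p` contains a Zeno configuration of size `k` with scale `u > 0`
centered at `x`: there are `k` points, one in each closed ball `D i` of radius `u`
centered at `zenoCenter x u i`, and the big closed ball `D` of radius `u * 3 ^ k`
centered at `x` contains no other points of the family. -/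
def ContainsZeno {n : ℕ} (p : Fin n → Pt 2) (k : ℕ) (u : ℝ) (x : Pt 2) : Prop :=
  0 < u ∧ ∃ f : Fin k → Fin n, Function.Injective f ∧
    (∀ i : Fin k, dist (p (f i)) (zenoCenter x u (i : ℕ)) ≤ u) ∧
    (∀ j : Fin n, dist (p j) x ≤ u * 3 ^ k → ∃ i : Fin k, j = f i)

/-- The Zeno size parameter `k = ⌊((α/2) log₃ n)^(1/2)⌋`. -/
noncomputable def kpar (α : ℝ) (n : ℕ) : ℕ :=
  ⌊Real.sqrt (α / 2 * Real.logb 3 n)⌋₊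

/-- The Zeno scale parameter `u = 1 / (√(π n) * 3 ^ k)`. -/
noncomputable def upar (α : ℝ) (n : ℕ) : ℝ :=
  1 / (Real.sqrt (Real.pi * n) * 3 ^ kpar α n)

/-- The radius `r = u * 3 ^ k` of the big ball of the Zeno configuration. -/
noncomputable def rpar (α : ℝ) (n : ℕ) : ℝ := upar α n * 3 ^ kpar α n

set_option maxRecDepth 20000
set_option maxHeartbeats 2000000

section ZenoAux
open Metric

lemma volume_box (a b : ℝ) :
    volume {y : Pt 2 | ∀ j, y j ∈ Set.Icc a b} = ENNReal.ofReal (b - a) ^ 2 := by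
  have e := EuclideanSpace.volume_preserving_symm_measurableEquiv_toLp (Fin 2)
  have h : {y : Pt 2 | ∀ j, y j ∈ Set.Icc a b}
      = (MeasurableEquiv.toLp 2 (Fin 2 → ℝ)).symm ⁻¹' (Set.pi Set.univ fun _ => Set.Icc a b) := by
    ext y
    simp only [Set.mem_preimage, Set.mem_univ_pi, Set.mem_setOf_eq]
    rfl
  rw [h, e.measure_preimage (MeasurableSet.univ_pi fun _ => measurableSet_Icc).nullMeasurableSet,
    volume_pi_pi]
  simp [Real.volume_Icc, sq]

lemma measurableSet_box (a b : ℝ) : MeasurableSet {y : Pt 2 | ∀ j, y j ∈ Set.Icc a b} := by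
  have h : {y : Pt 2 | ∀ j, y j ∈ Set.Icc a b} = ⋂ j, {y : Pt 2 | y j ∈ Set.Icc a b} := by
    ext y; simp
  rw [h]
  exact MeasurableSet.iInter fun j => (measurableSet_Icc).preimage
    (EuclideanSpace.proj (𝕜 := ℝ) j).continuous.measurable

instance instPMunif : IsProbabilityMeasure (unif 2) := by
  constructor
  rw [unif, Measure.restrict_apply_univ,
    show cube 2 = {y : Pt 2 | ∀ j, y j ∈ Set.Icc (0:ℝ) 1} from rfl, volume_box]
  norm_num

lemma unif_box {a b : ℝ} (ha : 0 ≤ a) (hb : b ≤ 1) :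
    unif 2 {y : Pt 2 | ∀ j, y j ∈ Set.Icc a b} = ENNReal.ofReal (b - a) ^ 2 := by
  rw [unif, Measure.restrict_apply (measurableSet_box a b)]
  rw [show {y : Pt 2 | ∀ j, y j ∈ Set.Icc a b} ∩ cube 2 = {y : Pt 2 | ∀ j, y j ∈ Set.Icc a b} from
    Set.inter_eq_left.2 fun y hy j => ⟨ha.trans (hy j).1, (hy j).2.trans hb⟩, volume_box]

lemma unif_closedBall {c : Pt 2} {s : ℝ} (hs : 0 ≤ s) (h : closedBall c s ⊆ cube 2) :
    unif 2 (closedBall c s) = ENNReal.ofReal (Real.pi * s ^ 2) := by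
  rw [unif, Measure.restrict_apply measurableSet_closedBall, Set.inter_eq_left.2 h,
    EuclideanSpace.volume_closedBall]
  rw [show (Fintype.card (Fin 2)) = 2 from by simp]
  have h2 : Real.sqrt Real.pi ^ 2 / Real.Gamma ((2:ℕ) / 2 + 1) = Real.pi := by
    norm_num
    exact Real.sq_sqrt Real.pi_nonneg
  rw [h2, ← ENNReal.ofReal_pow hs, ← ENNReal.ofReal_mul (by positivity), mul_comm]

lemma coord_le_dist (x y : Pt 2) (j : Fin 2) : |x j - y j| ≤ dist x y := by
  rw [EuclideanSpace.dist_eq]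
  have h1 : |x j - y j| = Real.sqrt (dist (x j) (y j) ^ 2) := by
    rw [Real.sqrt_sq_eq_abs, Real.dist_eq, abs_abs]
  rw [h1]
  apply Real.sqrt_le_sqrt
  exact Finset.single_le_sum (f := fun i => dist (x i) (y i) ^ 2)
    (fun i _ => sq_nonneg _) (Finset.mem_univ j)

lemma dist_zenoCenter (x : Pt 2) (u : ℝ) (hu : 0 ≤ u) (i : ℕ) :
    dist (zenoCenter x u i) x = if i = 0 then 0 else u * 3 ^ i := by
  unfold zenoCenter
  split_ifs with h
  · simp
  · rw [dist_eq_norm]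
    simp only [add_sub_cancel_left, EuclideanSpace.norm_single]
    rw [Real.norm_eq_abs, abs_of_nonneg (by positivity)]

lemma dist_zenoCenter_pair (x : Pt 2) (u : ℝ) (a b : ℕ) (ha : a ≠ 0) (hb : b ≠ 0) :
    dist (zenoCenter x u a) (zenoCenter x u b) = |u * 3 ^ a - u * 3 ^ b| := by
  unfold zenoCenter
  rw [if_neg ha, if_neg hb, dist_add_left, EuclideanSpace.dist_single_same, Real.dist_eq]

lemma closedBall_subset_cube {c : Pt 2} {ρ s : ℝ} (hs : s ≤ ρ) (hρ : ρ ≤ 1/2)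
    (hc : ∀ j, c j ∈ Set.Icc ρ (1 - ρ)) : closedBall c s ⊆ cube 2 := by
  intro y hy j
  have h := (abs_le.1 ((coord_le_dist y c j).trans ((mem_closedBall.1 hy).trans hs)))
  exact ⟨by linarith [(hc j).1], by linarith [(hc j).2]⟩

lemma measure_pi_split {m : ℕ} (μ : Measure (Pt 2)) [IsProbabilityMeasure μ]
    {B : Set (Pt 2)} (hB : MeasurableSet B) (A : Pt 2 → Fin m → Set (Pt 2))
    (hmeas : MeasurableSet {p : Pt 2 × (Fin m → Pt 2) | p.1 ∈ B ∧ ∀ j, p.2 j ∈ A p.1 j}) :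
    Measure.pi (fun _ : Fin (m+1) => μ) {x | x 0 ∈ B ∧ ∀ j : Fin m, x j.succ ∈ A (x 0) j}
      = ∫⁻ a in B, ∏ j, μ (A a j) ∂μ := by
  have e := measurePreserving_piFinSuccAbove (fun _ : Fin (m+1) => μ) 0
  set E' : Set (Pt 2 × (Fin m → Pt 2)) := {p | p.1 ∈ B ∧ ∀ j, p.2 j ∈ A p.1 j} with hE'
  have hpre : {x : Fin (m+1) → Pt 2 | x 0 ∈ B ∧ ∀ j : Fin m, x j.succ ∈ A (x 0) j}
      = (MeasurableEquiv.piFinSuccAbove (fun _ => Pt 2) 0) ⁻¹' E' := by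
    ext x
    simp only [Set.mem_preimage, Set.mem_setOf_eq, MeasurableEquiv.piFinSuccAbove_apply, hE',
      Fin.insertNthEquiv, Equiv.coe_fn_symm_mk, Fin.zero_succAbove]
    simp [Fin.removeNth, Fin.zero_succAbove]
  rw [hpre, e.measure_preimage hmeas.nullMeasurableSet, Measure.prod_apply hmeas]
  have key : ∀ a, (Measure.pi fun _ : Fin m => μ) (Prod.mk a ⁻¹' E')
      = B.indicator (fun a => ∏ j, μ (A a j)) a := by
    intro a
    by_cases ha : a ∈ B
    · rw [Set.indicator_of_mem ha]
      have h2 : Prod.mk a ⁻¹' E' = Set.pi Set.univ (A a) := by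
        ext y; simp [hE', ha, Set.mem_pi]
      rw [h2, Measure.pi_pi]
    · rw [Set.indicator_of_notMem ha]
      have h2 : Prod.mk a ⁻¹' E' = ∅ := by ext y; simp [hE', ha]
      rw [h2, measure_empty]
  simp_rw [key]
  rw [lintegral_indicator hB]

def zball (u : ℝ) (k : ℕ) (x : Pt 2) {K m : ℕ} (σ : Fin K ↪ Fin m) (j : Fin m) : Set (Pt 2) :=
  if h : ∃ i, σ i = j then closedBall (zenoCenter x u ((h.choose : ℕ) + 1)) u
  else (closedBall x (u * 3 ^ k))ᶜ

def zevent (u : ℝ) (k : ℕ) {K m : ℕ} (σ : Fin K ↪ Fin m) : Set (Fin (m+1) → Pt 2) :=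
  {x | (∀ j, x 0 j ∈ Set.Icc (u*3^k) (1 - u*3^k)) ∧ ∀ j : Fin m, x j.succ ∈ zball u k (x 0) σ j}

lemma zball_of_mem {u : ℝ} {k K m : ℕ} {x : Pt 2} (σ : Fin K ↪ Fin m) (i : Fin K) :
    zball u k x σ (σ i) = closedBall (zenoCenter x u ((i : ℕ) + 1)) u := by
  have h : ∃ i', σ i' = σ i := ⟨i, rfl⟩
  rw [zball, dif_pos h, σ.injective h.choose_spec]

lemma small_subset_big {u : ℝ} (hu : 0 ≤ u) {k K : ℕ} (hk : k = K + 1) {x : Pt 2} {c : ℕ}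
    (hc : c < K) : closedBall (zenoCenter x u (c + 1)) u ⊆ closedBall x (u * 3 ^ k) := by
  apply closedBall_subset_closedBall'
  rw [dist_zenoCenter x u hu, if_neg (Nat.succ_ne_zero c)]
  have h1 : (3:ℝ) ^ (c+1) ≤ 3 ^ K := pow_le_pow_right₀ (by norm_num) hc
  have h2 : (3:ℝ) ^ K + 1 ≤ 3 ^ k := by
    rw [hk, pow_succ]
    nlinarith [one_le_pow₀ (show (1:ℝ) ≤ 3 by norm_num) (n := K)]
  nlinarith [pow_pos (show (0:ℝ) < 3 by norm_num) K,
    pow_nonneg (show (0:ℝ) ≤ 3 by norm_num) (c+1)]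

lemma unif_zball {u : ℝ} (hu : 0 < u) {k K m : ℕ} (hk : k = K + 1) {x : Pt 2}
    (hx : ∀ j, x j ∈ Set.Icc (u*3^k) (1 - u*3^k)) (hr : u * 3^k ≤ 1/2) (σ : Fin K ↪ Fin m)
    (j : Fin m) :
    unif 2 (zball u k x σ j) = if ∃ i, σ i = j then ENNReal.ofReal (Real.pi * u^2)
      else 1 - ENNReal.ofReal (Real.pi * (u*3^k)^2) := by
  have hr0 : (0:ℝ) ≤ u * 3^k := by positivity
  have hsub : closedBall x (u * 3^k) ⊆ cube 2 := closedBall_subset_cube le_rfl hr hx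
  rw [zball]
  split_ifs with h
  · exact unif_closedBall hu.le (((small_subset_big hu.le hk h.choose.isLt)).trans hsub)
  · rw [measure_compl measurableSet_closedBall (measure_ne_top _ _),
      unif_closedBall hr0 hsub, measure_univ]

lemma prod_unif_zball {u : ℝ} (hu : 0 < u) {k K m : ℕ} (hk : k = K + 1) {x : Pt 2}
    (hx : ∀ j, x j ∈ Set.Icc (u*3^k) (1 - u*3^k)) (hr : u * 3^k ≤ 1/2) (σ : Fin K ↪ Fin m) :
    ∏ j : Fin m, unif 2 (zball u k x σ j)
      = ENNReal.ofReal (Real.pi * u^2) ^ K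
        * (1 - ENNReal.ofReal (Real.pi * (u*3^k)^2)) ^ (m - K) := by
  simp_rw [unif_zball hu hk hx hr σ]
  rw [Finset.prod_ite, Finset.prod_const, Finset.prod_const]
  have hfil : Finset.univ.filter (fun j : Fin m => ∃ i, σ i = j) = Finset.univ.map σ := by
    ext j; simp [Finset.mem_map]
  have hc1 : (Finset.univ.filter (fun j : Fin m => ∃ i, σ i = j)).card = K := by
    rw [hfil, Finset.card_map, Finset.card_univ, Fintype.card_fin]
  have hc2 : (Finset.univ.filter (fun j : Fin m => ¬ ∃ i, σ i = j)).card = m - K := by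
    have h := Finset.card_filter_add_card_filter_not
      (s := (Finset.univ : Finset (Fin m))) (p := fun j => ∃ i, σ i = j)
    rw [hc1, Finset.card_univ, Fintype.card_fin] at h
    omega
  rw [hc1, hc2]

lemma meas_prod_side (u : ℝ) (k : ℕ) {K m : ℕ} (σ : Fin K ↪ Fin m) :
    MeasurableSet {p : Pt 2 × (Fin m → Pt 2) |
      (∀ j, p.1 j ∈ Set.Icc (u*3^k) (1 - u*3^k)) ∧ ∀ j, p.2 j ∈ zball u k p.1 σ j} := by
  have h1 : MeasurableSet {p : Pt 2 × (Fin m → Pt 2) | ∀ j, p.1 j ∈ Set.Icc (u*3^k) (1 - u*3^k)} :=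
    measurable_fst (measurableSet_box _ _)
  have h2 : MeasurableSet {p : Pt 2 × (Fin m → Pt 2) | ∀ j, p.2 j ∈ zball u k p.1 σ j} := by
    have h : {p : Pt 2 × (Fin m → Pt 2) | ∀ j, p.2 j ∈ zball u k p.1 σ j}
        = ⋂ j, {p : Pt 2 × (Fin m → Pt 2) | p.2 j ∈ zball u k p.1 σ j} := by
      ext p; simp
    rw [h]
    refine MeasurableSet.iInter fun j => ?_
    by_cases h : ∃ i, σ i = j
    · simp only [zball, dif_pos h]
      have hm : Measurable fun p : Pt 2 × (Fin m → Pt 2) =>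
          dist (p.2 j) (zenoCenter p.1 u ((h.choose : ℕ) + 1)) := by
        apply Measurable.dist
        · exact (measurable_pi_apply j).comp measurable_snd
        · unfold zenoCenter
          simp only [if_neg (by omega : ¬((h.choose : ℕ) + 1 = 0))]
          exact measurable_fst.add_const _
      exact measurableSet_le hm measurable_const
    · simp only [zball, dif_neg h]
      have hm : Measurable fun p : Pt 2 × (Fin m → Pt 2) => dist (p.2 j) p.1 :=
        ((measurable_pi_apply j).comp measurable_snd).dist measurable_fst
      have heq : {p : Pt 2 × (Fin m → Pt 2) | p.2 j ∈ (closedBall p.1 (u * 3^k))ᶜ}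
          = {p : Pt 2 × (Fin m → Pt 2) | dist (p.2 j) p.1 ≤ u * 3^k}ᶜ := by
        ext p; simp [mem_closedBall]
      rw [heq]
      exact (measurableSet_le hm measurable_const).compl
  exact h1.inter h2

lemma meas_zevent (u : ℝ) (k : ℕ) {K m : ℕ} (σ : Fin K ↪ Fin m) :
    MeasurableSet (zevent u k σ) := by
  have hF : Measurable fun x : Fin (m+1) → Pt 2 => ((x 0, fun j : Fin m => x j.succ) :
      Pt 2 × (Fin m → Pt 2)) :=
    (measurable_pi_apply 0).prodMk (measurable_pi_iff.2 fun j => measurable_pi_apply _)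
  exact hF (meas_prod_side u k σ)

lemma zevent_subset_T {u : ℝ} (hu : 0 < u) {k K m : ℕ} (hk : k = K + 1)
    (σ : Fin K ↪ Fin m) :
    zevent u k σ ⊆ {x : Fin (m+1) → Pt 2 | ContainsZeno x k u (x 0)} := by
  rintro x ⟨hbox, hcond⟩
  subst hk
  refine ⟨hu, Fin.cases 0 (fun i => (σ i).succ), ?_, ?_, ?_⟩
  · intro a b hab
    induction a using Fin.cases with
    | zero => induction b using Fin.cases with
      | zero => rfl
      | succ b => simp only [Fin.cases_zero, Fin.cases_succ] at hab
                  exact absurd hab.symm (Fin.succ_ne_zero _)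
    | succ a => induction b using Fin.cases with
      | zero => simp only [Fin.cases_zero, Fin.cases_succ] at hab
                exact absurd hab (Fin.succ_ne_zero _)
      | succ b => simp only [Fin.cases_succ] at hab
                  exact congrArg Fin.succ (σ.injective (Fin.succ_injective _ hab))
  · intro i
    induction i using Fin.cases with
    | zero => simp [zenoCenter, hu.le]
    | succ i =>
      have h := hcond (σ i)
      rw [zball_of_mem σ i] at h
      simpa [Fin.val_succ] using h
  · intro j hj
    by_cases hj0 : j = 0
    · exact ⟨0, by simp [hj0]⟩
    · obtain ⟨j', rfl⟩ := Fin.eq_succ_of_ne_zero hj0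
      by_cases h : ∃ i, σ i = j'
      · obtain ⟨i, hi⟩ := h
        exact ⟨i.succ, by simp [Fin.cases_succ, hi]⟩
      · have hmem := hcond j'
        rw [zball, dif_neg h] at hmem
        simp only [Set.mem_compl_iff, mem_closedBall, not_le] at hmem
        exact absurd hj (not_le.2 hmem)

lemma centers_far {x : Pt 2} {u : ℝ} (hu : 0 < u) {a b : ℕ} (ha : a ≠ 0) (hb : b ≠ 0)
    (hab : a ≠ b) : 2 * u < dist (zenoCenter x u a) (zenoCenter x u b) := by
  rw [dist_zenoCenter_pair x u a b ha hb]
  have key : ∀ c d : ℕ, 1 ≤ c → c < d → 2 * u < u * 3 ^ d - u * 3 ^ c := by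
    intro c d hc hcd
    have h1 : (3:ℝ) ^ (c+1) ≤ 3 ^ d := pow_le_pow_right₀ (by norm_num) hcd
    have h2 : (3:ℝ) ≤ 3 ^ c := by
      calc (3:ℝ) = 3 ^ 1 := (pow_one 3).symm
      _ ≤ 3 ^ c := pow_le_pow_right₀ (by norm_num) hc
    have h3 : (0:ℝ) < 3 ^ c := by positivity
    have h4 : (3:ℝ) ^ (c+1) = 3 ^ c * 3 := pow_succ 3 c
    have h5 : (6:ℝ) ≤ 3 ^ d - 3 ^ c := by nlinarith
    nlinarith [mul_le_mul_of_nonneg_left h5 hu.le]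
  rcases lt_or_gt_of_ne hab with h | h
  · rw [abs_sub_comm, abs_of_pos (by linarith [key a b (Nat.one_le_iff_ne_zero.2 ha) h, hu])]
    exact key a b (Nat.one_le_iff_ne_zero.2 ha) h
  · rw [abs_of_pos (by linarith [key b a (Nat.one_le_iff_ne_zero.2 hb) h, hu])]
    exact key b a (Nat.one_le_iff_ne_zero.2 hb) h

lemma zevent_disjoint {u : ℝ} (hu : 0 < u) {k K m : ℕ} (hk : k = K + 1) :
    Pairwise fun σ τ : Fin K ↪ Fin m => Disjoint (zevent u k σ) (zevent u k τ) := by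
  intro σ τ hστ
  rw [Set.disjoint_left]
  rintro x ⟨_, hσ⟩ ⟨_, hτ⟩
  have hex : ∃ i, σ i ≠ τ i := by
    by_contra hcon
    push_neg at hcon
    exact hστ (DFunLike.ext σ τ hcon)
  obtain ⟨i, hi⟩ := hex
  have h1 := hσ (σ i)
  rw [zball_of_mem σ i] at h1
  have h2 := hτ (σ i)
  by_cases h : ∃ i', τ i' = σ i
  · rw [zball, dif_pos h] at h2
    have hne : (h.choose : ℕ) ≠ (i : ℕ) := by
      intro hcon
      have heq : h.choose = i := Fin.ext hcon
      exact hi (by rw [← h.choose_spec, heq])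
    have hfar := centers_far (x := x 0) hu (Nat.succ_ne_zero (i:ℕ))
      (Nat.succ_ne_zero (h.choose:ℕ)) (by omega)
    have htri := dist_triangle (zenoCenter (x 0) u ((i:ℕ)+1)) (x (σ i).succ)
      (zenoCenter (x 0) u ((h.choose:ℕ)+1))
    rw [mem_closedBall] at h1 h2
    rw [dist_comm (zenoCenter (x 0) u ((i:ℕ)+1)) (x (σ i).succ)] at htri
    linarith
  · rw [zball, dif_neg h] at h2
    simp only [Set.mem_compl_iff, mem_closedBall, not_le] at h2
    have hin := small_subset_big hu.le hk i.isLt h1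
    rw [mem_closedBall] at hin
    linarith

lemma measure_zevent {u : ℝ} (hu : 0 < u) {k K m : ℕ} (hk : k = K + 1)
    (hr : u * 3^k ≤ 1/2) (σ : Fin K ↪ Fin m) :
    iidUnif 2 (m+1) (zevent u k σ)
      = ENNReal.ofReal (1 - 2*(u*3^k)) ^ 2 *
        (ENNReal.ofReal (Real.pi * u^2) ^ K
          * (1 - ENNReal.ofReal (Real.pi * (u*3^k)^2)) ^ (m-K)) := by
  have hr0 : (0:ℝ) ≤ u*3^k := by positivity
  rw [iidUnif]
  have hset : zevent u k σ = {x : Fin (m+1) → Pt 2 |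
      x 0 ∈ {y : Pt 2 | ∀ j, y j ∈ Set.Icc (u*3^k) (1 - u*3^k)} ∧
      ∀ j : Fin m, x j.succ ∈ (fun a j => zball u k a σ j) (x 0) j} := rfl
  rw [hset, measure_pi_split (unif 2) (measurableSet_box (u*3^k) (1 - u*3^k))
    (fun a j => zball u k a σ j) (by exact meas_prod_side u k σ)]
  rw [setLIntegral_congr_fun (measurableSet_box _ _)
    (fun a ha => prod_unif_zball hu hk ha hr σ)]
  rw [setLIntegral_const, unif_box hr0 (by linarith),
    show (1 - u*3^k) - u*3^k = 1 - 2*(u*3^k) from by ring, mul_comm]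

lemma measure_union_zevent {u : ℝ} (hu : 0 < u) {k K m : ℕ} (hk : k = K + 1)
    (hr : u * 3^k ≤ 1/2) :
    iidUnif 2 (m+1) (⋃ σ : Fin K ↪ Fin m, zevent u k σ)
      = (m.descFactorial K) *
        (ENNReal.ofReal (1 - 2*(u*3^k)) ^ 2 *
        (ENNReal.ofReal (Real.pi * u^2) ^ K
          * (1 - ENNReal.ofReal (Real.pi * (u*3^k)^2)) ^ (m-K))) := by
  rw [measure_iUnion (zevent_disjoint hu hk) (fun σ => meas_zevent u k σ)]
  simp_rw [measure_zevent hu hk hr]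
  rw [tsum_fintype, Finset.sum_const, Finset.card_univ, Fintype.card_embedding_eq,
    Fintype.card_fin, Fintype.card_fin, nsmul_eq_mul]

lemma exp_bound {N : ℝ} (hN : 2 ≤ N) (j : ℕ) (hj : (j:ℝ) ≤ N) :
    Real.exp (-2) ≤ (1 - 1/N)^j := by
  have hNpos : (0:ℝ) < N := by linarith
  have hstep : Real.exp (-(2/N)) ≤ 1 - 1/N := by
    have he1 : Real.exp (-(2/N)) = (Real.exp (2/N))⁻¹ := Real.exp_neg _
    have he2 : 1 + 2/N ≤ Real.exp (2/N) := by linarith [Real.add_one_le_exp (2/N)]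
    have he3 : (Real.exp (2/N))⁻¹ ≤ (1 + 2/N)⁻¹ := inv_anti₀ (by positivity) he2
    have he4 : (1 + 2/N)⁻¹ ≤ 1 - 1/N := by
      rw [show (1 + 2/N)⁻¹ = N/(N+2) from by field_simp,
        show 1 - 1/N = (N-1)/N from by field_simp,
        div_le_div_iff₀ (by positivity) hNpos]
      nlinarith
    linarith
  calc Real.exp (-2) ≤ Real.exp ((j:ℝ) * (-(2/N))) := by
        apply Real.exp_le_exp.2
        have hfrac : (j:ℝ) * (2/N) ≤ 2 := by
          have h := mul_le_mul_of_nonneg_right hj (by positivity : (0:ℝ) ≤ 2/N)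
          have heq : N * (2/N) = 2 := by field_simp
          linarith
        nlinarith
  _ = Real.exp (-(2/N)) ^ j := by rw [← Real.exp_nat_mul]
  _ ≤ (1 - 1/N)^j := pow_le_pow_left₀ (Real.exp_nonneg _) hstep _

lemma desc_bound {m K k : ℕ} (hkK : k = K + 1) (h2k2 : 2*(k:ℝ)^2 ≤ ((m+1:ℕ):ℝ))
    (hkm : k ≤ m + 1) :
    ((m+1:ℕ):ℝ)^K * (1/2) ≤ (m.descFactorial K : ℝ) := by
  have hKm1 : K ≤ m + 1 := by omega
  have hNpos : (0:ℝ) < ((m+1:ℕ):ℝ) := by positivity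
  have hkR : (1:ℝ) ≤ (k:ℝ) := by exact_mod_cast (by omega : 1 ≤ k)
  have hkn : (k:ℝ) ≤ ((m+1:ℕ):ℝ) := by exact_mod_cast hkm
  have hKk : (K:ℝ) ≤ (k:ℝ) := by exact_mod_cast (by omega : K ≤ k)
  have hdesc : ((m+1-K)^K : ℕ) ≤ m.descFactorial K := Nat.pow_sub_le_descFactorial m K
  have hcast : (((m+1-K : ℕ)) : ℝ) = ((m+1:ℕ):ℝ) - K := by
    rw [Nat.cast_sub hKm1]
  have hber : (1:ℝ)/2 ≤ (1 - (k:ℝ)/((m+1:ℕ):ℝ))^K := by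
    have hb1 : (-2:ℝ) ≤ -((k:ℝ)/((m+1:ℕ):ℝ)) := by
      have h : (k:ℝ)/((m+1:ℕ):ℝ) ≤ 1 := by rw [div_le_one hNpos]; exact hkn
      linarith
    have hb2 := one_add_mul_le_pow hb1 K
    have hb3 : (K:ℝ)*((k:ℝ)/((m+1:ℕ):ℝ)) ≤ 1/2 := by
      have hd1 : (K:ℝ)*((k:ℝ)/((m+1:ℕ):ℝ)) ≤ (k:ℝ)*((k:ℝ)/((m+1:ℕ):ℝ)) :=
        mul_le_mul_of_nonneg_right hKk (by positivity)
      have hd2 : (k:ℝ)*((k:ℝ)/((m+1:ℕ):ℝ)) = (k:ℝ)^2/((m+1:ℕ):ℝ) := by ring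
      have hd3 : (k:ℝ)^2/((m+1:ℕ):ℝ) ≤ 1/2 := by
        rw [div_le_div_iff₀ hNpos (by norm_num)]
        linarith
      linarith
    calc (1:ℝ)/2 ≤ 1 + (K:ℝ)*(-((k:ℝ)/((m+1:ℕ):ℝ))) := by
          have h : (K:ℝ)*(-((k:ℝ)/((m+1:ℕ):ℝ))) = -((K:ℝ)*((k:ℝ)/((m+1:ℕ):ℝ))) := by ring
          rw [h]; linarith
    _ ≤ (1 + -((k:ℝ)/((m+1:ℕ):ℝ)))^K := hb2
    _ = (1 - (k:ℝ)/((m+1:ℕ):ℝ))^K := by ring_nf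
  calc ((m+1:ℕ):ℝ)^K * (1/2) ≤ ((m+1:ℕ):ℝ)^K * (1 - (k:ℝ)/((m+1:ℕ):ℝ))^K :=
        mul_le_mul_of_nonneg_left hber (by positivity)
  _ = (((m+1:ℕ):ℝ) * (1 - (k:ℝ)/((m+1:ℕ):ℝ)))^K := (mul_pow _ _ _).symm
  _ = (((m+1:ℕ):ℝ) - (k:ℝ))^K := by congr 1; field_simp
  _ ≤ (((m+1:ℕ):ℝ) - (K:ℝ))^K := pow_le_pow_left₀ (by linarith) (by linarith) K
  _ = (((m+1-K : ℕ)) : ℝ)^K := by rw [hcast]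
  _ = (((m+1-K)^K : ℕ) : ℝ) := by push_cast; ring
  _ ≤ (m.descFactorial K : ℝ) := by exact_mod_cast hdesc

end ZenoAux

/-- For `n` i.i.d. uniform points in `[0,1]²`, the conditional probability that the
points contain a Zeno configuration of size `k` with scale `u` centered at the first
point, given that the first point lies in `[r, 1-r]²`, is at least
`C * 3 ^ (-2k(k-1))`, and hence at least `C' * n ^ (-α)`. -/

theorem zeno_conditional_probability (α : ℝ) (hα : α ∈ Set.Ioo (0 : ℝ) 1) :
    ∃ C : ℝ, 0 < C ∧ ∃ C' : ℝ, 0 < C' ∧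
      ∀ᶠ n : ℕ in atTop, ∀ hn : 0 < n,
        ENNReal.ofReal
            (C * (3 : ℝ) ^ (-2 * (kpar α n : ℝ) * ((kpar α n : ℝ) - 1))) ≤
          ProbabilityTheory.cond (iidUnif 2 n)
            {x | ∀ j : Fin 2, x ⟨0, hn⟩ j ∈ Set.Icc (rpar α n) (1 - rpar α n)}
            {x | ContainsZeno x (kpar α n) (upar α n) (x ⟨0, hn⟩)} ∧
        ENNReal.ofReal (C' * (n : ℝ) ^ (-α)) ≤
          ProbabilityTheory.cond (iidUnif 2 n)
            {x | ∀ j : Fin 2, x ⟨0, hn⟩ j ∈ Set.Icc (rpar α n) (1 - rpar α n)}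
            {x | ContainsZeno x (kpar α n) (upar α n) (x ⟨0, hn⟩)} := by
  obtain ⟨hα0, hα1⟩ := hα
  have hCpos : (0:ℝ) < Real.exp (-2) / 8 := by positivity
  refine ⟨Real.exp (-2) / 8, hCpos, Real.exp (-2) / 8, hCpos, ?_⟩
  have h3 : (1:ℝ) < 3 := by norm_num
  have hlogtend : Tendsto (fun n : ℕ => Real.logb 3 n) atTop atTop :=
    (Real.tendsto_logb_atTop h3).comp tendsto_natCast_atTop_atTop
  filter_upwards [hlogtend.eventually_ge_atTop (2/α), eventually_ge_atTop 400] with n hlog hn400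
  intro hn
  obtain ⟨m, rfl⟩ : ∃ m, n = m + 1 := ⟨n - 1, by omega⟩
  have h0 : (⟨0, hn⟩ : Fin (m+1)) = 0 := by ext; simp
  simp only [h0]
  set C : ℝ := Real.exp (-2) / 8 with hCdef
  set k := kpar α (m+1) with hkdef
  set u := upar α (m+1) with hudef
  have hNpos : (0:ℝ) < ((m+1:ℕ):ℝ) := by positivity
  have hN400 : (400:ℝ) ≤ ((m+1:ℕ):ℝ) := by exact_mod_cast hn400
  -- basic numeric facts about k
  have hn1 : (1:ℝ) ≤ ((m+1:ℕ):ℝ) := by linarith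
  have hlogb_nonneg : 0 ≤ Real.logb 3 ((m+1:ℕ):ℝ) := Real.logb_nonneg h3 hn1
  have hsq_nonneg : 0 ≤ α/2 * Real.logb 3 ((m+1:ℕ):ℝ) := mul_nonneg (by linarith) hlogb_nonneg
  have hk1 : 1 ≤ k := by
    rw [hkdef, kpar]
    apply Nat.le_floor
    rw [Nat.cast_one, show (1:ℝ) = Real.sqrt 1 from Real.sqrt_one.symm]
    apply Real.sqrt_le_sqrt
    calc (1:ℝ) = α/2 * (2/α) := by field_simp
    _ ≤ α/2 * Real.logb 3 ((m+1:ℕ):ℝ) := mul_le_mul_of_nonneg_left hlog (by linarith)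
  have hkR : (1:ℝ) ≤ (k:ℝ) := by exact_mod_cast hk1
  have hksq : (k:ℝ)^2 ≤ α/2 * Real.logb 3 ((m+1:ℕ):ℝ) := by
    have h1 : (k:ℝ) ≤ Real.sqrt (α/2 * Real.logb 3 ((m+1:ℕ):ℝ)) := by
      rw [hkdef, kpar]
      exact Nat.floor_le (Real.sqrt_nonneg _)
    calc (k:ℝ)^2 ≤ Real.sqrt (α/2 * Real.logb 3 ((m+1:ℕ):ℝ))^2 :=
          pow_le_pow_left₀ (by positivity) h1 2
    _ = α/2 * Real.logb 3 ((m+1:ℕ):ℝ) := Real.sq_sqrt hsq_nonneg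
  have hlog3ge1 : (1:ℝ) ≤ Real.log 3 := by
    rw [Real.le_log_iff_exp_le (by norm_num)]
    calc Real.exp 1 ≤ 2.7182818286 := Real.exp_one_lt_d9.le
    _ ≤ 3 := by norm_num
  have hlogb_le : Real.logb 3 ((m+1:ℕ):ℝ) ≤ Real.log ((m+1:ℕ):ℝ) := by
    rw [Real.logb]
    exact div_le_self (Real.log_nonneg hn1) hlog3ge1
  have hlogn : Real.log ((m+1:ℕ):ℝ) ≤ ((m+1:ℕ):ℝ) - 1 := Real.log_le_sub_one_of_pos hNpos
  have h2k2 : 2*(k:ℝ)^2 ≤ ((m+1:ℕ):ℝ) := by nlinarith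
  have hkn : (k:ℝ) ≤ ((m+1:ℕ):ℝ) := by nlinarith
  obtain ⟨K, hkK⟩ : ∃ K, k = K + 1 := ⟨k - 1, by omega⟩
  have hKk : (K:ℝ) ≤ (k:ℝ) := by exact_mod_cast (by omega : K ≤ k)
  have hkm : k ≤ m + 1 := by exact_mod_cast hkn
  have hKm1 : K ≤ m + 1 := by omega
  -- u and r values
  have hsqrtpos : 0 < Real.sqrt (Real.pi * ((m+1:ℕ):ℝ)) := Real.sqrt_pos.2 (by positivity)
  have hupos : 0 < u := by
    rw [hudef, upar, ← hkdef]
    positivity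
  have hrval : u * 3^k = 1 / Real.sqrt (Real.pi * ((m+1:ℕ):ℝ)) := by
    rw [hudef, upar, ← hkdef]
    field_simp
  have hrpar : rpar α (m+1) = u * 3^k := rfl
  have hrsmall : u * 3^k ≤ 1/20 := by
    rw [hrval, div_le_div_iff₀ hsqrtpos (by norm_num)]
    have h20 : (20:ℝ) ≤ Real.sqrt (Real.pi * ((m+1:ℕ):ℝ)) := by
      rw [show (20:ℝ) = Real.sqrt 400 from by
        rw [show (400:ℝ) = 20^2 by norm_num, Real.sqrt_sq (by norm_num)]]
      apply Real.sqrt_le_sqrt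
      nlinarith [Real.pi_gt_three]
    linarith
  have hrnonneg : (0:ℝ) ≤ u * 3^k := (mul_pos hupos (pow_pos (by norm_num) k)).le
  have hr2 : Real.pi * (u*3^k)^2 = 1/((m+1:ℕ):ℝ) := by
    rw [hrval, div_pow, one_pow, Real.sq_sqrt (by positivity)]
    field_simp
  have hu2 : Real.pi * u^2 = 1/(((m+1:ℕ):ℝ) * ((3:ℝ)^k)^2) := by
    rw [hudef, upar, ← hkdef, div_pow, one_pow, mul_pow, Real.sq_sqrt (by positivity)]
    field_simp
  -- rewrite goal in terms of u * 3^k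
  rw [hrpar]
  haveI hprob : IsProbabilityMeasure (iidUnif 2 (m+1)) := by
    unfold iidUnif; infer_instance
  have hSmeas : MeasurableSet {x : Fin (m+1) → Pt 2 |
      ∀ j : Fin 2, x 0 j ∈ Set.Icc (u*3^k) (1 - u*3^k)} := by
    have : {x : Fin (m+1) → Pt 2 | ∀ j : Fin 2, x 0 j ∈ Set.Icc (u*3^k) (1 - u*3^k)}
        = (fun x : Fin (m+1) → Pt 2 => x 0) ⁻¹' {y : Pt 2 | ∀ j, y j ∈ Set.Icc (u*3^k) (1 - u*3^k)} := rfl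
    rw [this]
    exact measurable_pi_apply 0 (measurableSet_box _ _)
  -- main inequality
  have hsub : (⋃ σ : Fin K ↪ Fin m, zevent u k σ)
      ⊆ {x : Fin (m+1) → Pt 2 | ∀ j : Fin 2, x 0 j ∈ Set.Icc (u*3^k) (1 - u*3^k)}
        ∩ {x : Fin (m+1) → Pt 2 | ContainsZeno x k u (x 0)} := by
    refine Set.iUnion_subset fun σ => Set.subset_inter (fun x hx => hx.1) (zevent_subset_T hupos hkK σ)
  have main1 : ENNReal.ofReal (C * (3:ℝ) ^ (-2 * (k:ℝ) * ((k:ℝ) - 1))) ≤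
      ProbabilityTheory.cond (iidUnif 2 (m+1))
        {x : Fin (m+1) → Pt 2 | ∀ j : Fin 2, x 0 j ∈ Set.Icc (u*3^k) (1 - u*3^k)}
        {x : Fin (m+1) → Pt 2 | ContainsZeno x k u (x 0)} := by
    rw [ProbabilityTheory.cond_apply hSmeas]
    refine le_trans ?_ (le_mul_of_one_le_left zero_le (ENNReal.one_le_inv.2 prob_le_one))
    refine le_trans ?_ (measure_mono hsub)
    rw [measure_union_zevent hupos hkK (by linarith)]
    -- convert RHS to ofReal
    have hout_le1 : Real.pi * (u*3^k)^2 ≤ 1 := by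
      rw [hr2]
      rw [div_le_one hNpos]
      linarith
    have ha : (0:ℝ) ≤ 1 - 2*(u*3^k) := by linarith
    have hb : (0:ℝ) ≤ Real.pi * u^2 := mul_nonneg Real.pi_nonneg (sq_nonneg _)
    have hc : (0:ℝ) ≤ 1 - Real.pi * (u*3^k)^2 := by linarith
    have e1 : (1 : ENNReal) - ENNReal.ofReal (Real.pi * (u*3^k)^2)
        = ENNReal.ofReal (1 - Real.pi * (u*3^k)^2) := by
      rw [ENNReal.ofReal_sub 1 (mul_nonneg Real.pi_nonneg (sq_nonneg _)), ENNReal.ofReal_one]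
    rw [e1, ← ENNReal.ofReal_pow ha, ← ENNReal.ofReal_pow hb, ← ENNReal.ofReal_pow hc,
      ← ENNReal.ofReal_mul (pow_nonneg hb K), ← ENNReal.ofReal_mul (pow_nonneg ha 2),
      ← ENNReal.ofReal_natCast (m.descFactorial K),
      ← ENNReal.ofReal_mul (Nat.cast_nonneg _)]
    apply ENNReal.ofReal_le_ofReal
    -- the real inequality
    rw [hr2, hu2]
    -- abbreviations
    have hPpos : (0:ℝ) < (3:ℝ)^k := by positivity
    have hNKpos : (0:ℝ) < ((m+1:ℕ):ℝ)^K := by positivity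
    have hQpos : (0:ℝ) < ((3:ℝ)^k)^(2*K) := by positivity
    -- LHS = C * (((3)^k)^(2K))⁻¹
    have hexp : (-2:ℝ) * (k:ℝ) * ((k:ℝ) - 1) = -((2*k*K : ℕ) : ℝ) := by
      rw [hkK]; push_cast; ring
    have hL : (3:ℝ) ^ ((-2:ℝ) * (k:ℝ) * ((k:ℝ)-1)) = (((3:ℝ)^k)^(2*K))⁻¹ := by
      rw [hexp, Real.rpow_neg (by norm_num), Real.rpow_natCast,
        show 2*k*K = k*(2*K) from by ring, pow_mul]
    rw [hL]
    -- bound pieces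
    have hA : ((m+1:ℕ):ℝ)^K * (1/2) ≤ (m.descFactorial K : ℝ) :=
      desc_bound hkK h2k2 hkm
    have hB : (1:ℝ)/2 ≤ (1 - 2*(u*3^k))^2 := by nlinarith
    have hE : Real.exp (-2) ≤ (1 - 1/((m+1:ℕ):ℝ))^(m-K) :=
      exp_bound (by linarith) (m-K) (by exact_mod_cast (by omega : m - K ≤ m+1))
    have hsmall : (1/(((m+1:ℕ):ℝ) * ((3:ℝ)^k)^2))^K = (((m+1:ℕ):ℝ)^K * ((3:ℝ)^k)^(2*K))⁻¹ := by
      rw [div_pow, one_pow, mul_pow, ← pow_mul, one_div, mul_comm 2 K]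
    rw [hsmall]
    have hcomb : C * (((3:ℝ)^k)^(2*K))⁻¹
        ≤ (((m+1:ℕ):ℝ)^K * (1/2)) * ((1/2) *
          (((((m+1:ℕ):ℝ)^K * ((3:ℝ)^k)^(2*K))⁻¹) * Real.exp (-2))) := by
      have heq : (((m+1:ℕ):ℝ)^K * (1/2)) * ((1/2) *
          (((((m+1:ℕ):ℝ)^K * ((3:ℝ)^k)^(2*K))⁻¹) * Real.exp (-2)))
          = Real.exp (-2)/4 * (((3:ℝ)^k)^(2*K))⁻¹ := by
        field_simp
        ring
      rw [heq, hCdef]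
      apply mul_le_mul_of_nonneg_right _ (by positivity)
      linarith [Real.exp_pos (-2)]
    refine hcomb.trans ?_
    gcongr ?_ * (?_ * (_ * ?_))
  refine ⟨main1, le_trans (ENNReal.ofReal_le_ofReal ?_) main1⟩
  apply mul_le_mul_of_nonneg_left _ hCpos.le
  have hN3 : (((m+1:ℕ)):ℝ)^(-α) = (3:ℝ)^(-(α * Real.logb 3 ((m+1:ℕ):ℝ))) := by
    calc (((m+1:ℕ)):ℝ)^(-α)
        = ((3:ℝ) ^ Real.logb 3 ((m+1:ℕ):ℝ))^(-α) := by
          rw [Real.rpow_logb (by norm_num) (by norm_num) hNpos]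
    _ = (3:ℝ)^(Real.logb 3 ((m+1:ℕ):ℝ) * (-α)) :=
          (Real.rpow_mul (by norm_num) _ _).symm
    _ = (3:ℝ)^(-(α * Real.logb 3 ((m+1:ℕ):ℝ))) := by ring_nf
  rw [hN3, Real.rpow_le_rpow_left_iff h3]
  nlinarith [hksq, hkR]
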